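/- Let P be a probability on Ω = ∏_{i∈Λ}{0,1} with Λ finite. P satisfies the FKG lattice condition (P(ω∨ω')P(ω∧ω') ≥ P(ω)P(ω') for all ω,ω') if and only if for every K ⊆ Λ, every α ∈ {0,1}^K, and every ω on K^c, P(α·ω)·P(α·ω̄) ≤ P(α·1̂)·P(α·0̂), where ω̄ is the coordinatewise flip of ω on K^c, 1̂ is the all-ones configuration on K^c and 0̂ the all-zeros configuration on K^c, and α·ω denotes concatenation. -/
import Mathlib


variable {Λ : Type*}

/-- Concatenation `α·ω`: agrees with `α` on `K` and with `ω` on `Kᶜ`. -/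
def glue (K : Finset Λ) [DecidableEq Λ] (α ω : Λ → Bool) : Λ → Bool :=
  fun i => if i ∈ K then α i else ω i

/-- Coordinatewise flip. -/
def flipC (ω : Λ → Bool) : Λ → Bool := fun i => !ω i

/-- `P` satisfies the FKG lattice condition iff for every `K ⊆ Λ`,
`α ∈ {0,1}^K` and `ω` on `Kᶜ`, `P(α·ω)·P(α·ω̄) ≤ P(α·1̂)·P(α·0̂)`. -/
theorem fkg_iff_folded_max [DecidableEq Λ] [Fintype Λ]
    (P : (Λ → Bool) → ℝ) (h0 : ∀ ω, 0 ≤ P ω) :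
    (∀ ω ω' : Λ → Bool,
        P ω * P ω' ≤ P (fun i => ω i || ω' i) * P (fun i => ω i && ω' i)) ↔
    (∀ (K : Finset Λ) (α ω : Λ → Bool),
        P (glue K α ω) * P (glue K α (flipC ω)) ≤
          P (glue K α fun _ => true) * P (glue K α fun _ => false)) := by
  constructor
  · intro h K α ω
    have := h (glue K α ω) (glue K α (flipC ω))
    have h1 : (fun i => glue K α ω i || glue K α (flipC ω) i)
        = glue K α (fun _ => true) := by
      funext i; simp only [glue, flipC]
      by_cases hi : i ∈ K <;> simp [hi]
    have h2 : (fun i => glue K α ω i && glue K α (flipC ω) i)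
        = glue K α (fun _ => false) := by
      funext i; simp only [glue, flipC]
      by_cases hi : i ∈ K <;> simp [hi]
    rwa [h1, h2] at this
  · intro h ω ω'
    set K : Finset Λ := Finset.univ.filter (fun i => ω i = ω' i) with hK
    have := h K ω ω
    have e1 : glue K ω ω = ω := by
      funext i; simp [glue]
    have e2 : glue K ω (flipC ω) = ω' := by
      funext i; simp only [glue, flipC, hK, Finset.mem_filter, Finset.mem_univ,
        true_and]
      by_cases hi : ω i = ω' i
      · simp [hi]
      · simp only [hi, if_false]
        cases hw : ω i <;> cases hw' : ω' i <;> simp_all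
    have e3 : glue K ω (fun _ => true) = fun i => ω i || ω' i := by
      funext i; simp only [glue, hK, Finset.mem_filter, Finset.mem_univ, true_and]
      by_cases hi : ω i = ω' i
      · simp [hi]
      · simp only [hi, if_false]
        cases hw : ω i <;> cases hw' : ω' i <;> simp_all
    have e4 : glue K ω (fun _ => false) = fun i => ω i && ω' i := by
      funext i; simp only [glue, hK, Finset.mem_filter, Finset.mem_univ, true_and]
      by_cases hi : ω i = ω' i
      · simp [hi]
      · simp only [hi, if_false]
        cases hw : ω i <;> cases hw' : ω' i <;> simp_all
    rwa [e1, e2, e3, e4] at this
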